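/- Suppose E : I → ℝ and z : I → V (a finite-dimensional real vector space) satisfy, for all η in an open interval I and all w ∈ V, the eigenvalue relation A_D(η)(z(η), w) = E(η)·A_W(η)(z(η), w), where A_D, A_W : I → (symmetric bilinear forms on V) are differentiable, z is differentiable, E is differentiable, and A_W(η) is positive definite with A_W(η)(z(η),z(η)) ≠ 0. Then E'(η) = [A_D'(η)(z,z) − E(η)·A_W'(η)(z,z)] / A_W(η)(z,z), where A_D', A_W' denote derivatives with z held fixed at z(η). -/

import Mathlib

open Finset

lemma exp1 {V : Type*} [AddCommGroup V] [Module ℝ V] {ι : Type*} [Fintype ι]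
    (b : Module.Basis ι ℝ V) (N : V →ₗ[ℝ] V →ₗ[ℝ] ℝ) (u w : V) :
    N u w = ∑ i, b.repr u i * N (b i) w := by
  conv_lhs => rw [← b.sum_repr u]
  simp only [map_sum, map_smul, LinearMap.sum_apply, LinearMap.smul_apply, smul_eq_mul]

lemma exp2 {V : Type*} [AddCommGroup V] [Module ℝ V] {ι : Type*} [Fintype ι]
    (b : Module.Basis ι ℝ V) (N : V →ₗ[ℝ] V →ₗ[ℝ] ℝ) (u w : V) :
    N u w = ∑ i, ∑ j, b.repr u i * b.repr w j * N (b i) (b j) := by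
  rw [exp1 b N u w]
  refine Finset.sum_congr rfl fun i _ => ?_
  conv_lhs => rw [← b.sum_repr w]
  simp only [map_sum, map_smul, smul_eq_mul, Finset.mul_sum, mul_assoc]

lemma key {V : Type*} [NormedAddCommGroup V] [NormedSpace ℝ V]
    [FiniteDimensional ℝ V] {ι : Type*} [Fintype ι]
    (b : Module.Basis ι ℝ V) (M : ℝ → V →ₗ[ℝ] V →ₗ[ℝ] ℝ) (η : ℝ)
    (hM : ∀ i j, DifferentiableAt ℝ (fun s => M s (b i) (b j)) η)
    (z : ℝ → V) (hz : DifferentiableAt ℝ z η) :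
    HasDerivAt (fun s => M s (z s) (z s))
      (deriv (fun s => M s (z η) (z η)) η
        + M η (∑ i, deriv (fun s => b.repr (z s) i) η • b i) (z η)
        + M η (z η) (∑ i, deriv (fun s => b.repr (z s) i) η • b i)) η := by
  set c : ι → ℝ → ℝ := fun i s => b.repr (z s) i with hc_def
  set d : ι → ℝ := fun i => deriv (c i) η with hd_def
  have hc : ∀ i, HasDerivAt (c i) (d i) η := by
    intro i
    have h1 : DifferentiableAt ℝ (c i) η := by
      have : c i = fun s => (LinearMap.toContinuousLinearMap (b.coord i)) (z s) := by
        funext s; simp [hc_def, Module.Basis.coord_apply]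
      rw [this]
      exact ((LinearMap.toContinuousLinearMap (b.coord i)).differentiableAt).comp η hz
    exact h1.hasDerivAt
  set v : V := ∑ i, d i • b i with hv_def
  set aη : ι → ι → ℝ := fun i j => M η (b i) (b j) with haη_def
  set da : ι → ι → ℝ := fun i j => deriv (fun s => M s (b i) (b j)) η with hda_def
  have hMa : ∀ i j, HasDerivAt (fun s => M s (b i) (b j)) (da i j) η :=
    fun i j => (hM i j).hasDerivAt
  -- derivative of the full sum
  have hsum : HasDerivAt (fun s => ∑ i, ∑ j, c i s * c j s * M s (b i) (b j))
      (∑ i, ∑ j, ((d i * c j η + c i η * d j) * aη i j + c i η * c j η * da i j)) η := by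
    refine HasDerivAt.fun_sum fun i _ => HasDerivAt.fun_sum fun j _ => ?_
    exact ((hc i).mul (hc j)).mul (hMa i j)
  have heqf : (fun s => M s (z s) (z s))
      = fun s => ∑ i, ∑ j, c i s * c j s * M s (b i) (b j) := by
    funext s; exact exp2 b (M s) (z s) (z s)
  rw [heqf]
  convert hsum using 1
  -- identify the value of the derivative
  have h1 : deriv (fun s => M s (z η) (z η)) η = ∑ i, ∑ j, c i η * c j η * da i j := by
    have : HasDerivAt (fun s => M s (z η) (z η)) (∑ i, ∑ j, c i η * c j η * da i j) η := by
      have heq : (fun s => M s (z η) (z η))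
          = fun s => ∑ i, ∑ j, c i η * c j η * M s (b i) (b j) := by
        funext s; exact exp2 b (M s) (z η) (z η)
      rw [heq]
      exact HasDerivAt.fun_sum fun i _ => HasDerivAt.fun_sum fun j _ =>
        (hMa i j).const_mul _
    exact this.deriv
  have hrepr_v : ∀ i, b.repr v i = d i := by
    intro i
    classical
    simp [hv_def, Finsupp.single_apply, Finset.sum_ite_eq']
  have h2 : M η v (z η) = ∑ i, ∑ j, d i * c j η * aη i j := by
    rw [exp2 b (M η) v (z η)]
    exact Finset.sum_congr rfl fun i _ => Finset.sum_congr rfl fun j _ => by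
      rw [hrepr_v]
  have h3 : M η (z η) v = ∑ i, ∑ j, c i η * d j * aη i j := by
    rw [exp2 b (M η) (z η) v]
    exact Finset.sum_congr rfl fun i _ => Finset.sum_congr rfl fun j _ => by
      rw [hrepr_v]
  rw [h1, h2, h3, ← Finset.sum_add_distrib, ← Finset.sum_add_distrib]
  refine Finset.sum_congr rfl fun i _ => ?_
  rw [← Finset.sum_add_distrib, ← Finset.sum_add_distrib]
  refine Finset.sum_congr rfl fun j _ => ?_
  ring


/-- Hellmann–Feynman-type formula for the derivative of a
generalized eigenvalue: if `A_D(η)(z(η),w) = E(η) A_W(η)(z(η),w)` for all `w`,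
then `E' = (A_D'(z,z) - E A_W'(z,z)) / A_W(z,z)`, the derivatives of the
bilinear forms being taken with `z` held fixed. -/
theorem stmt_19 {V : Type*} [NormedAddCommGroup V] [NormedSpace ℝ V]
    [FiniteDimensional ℝ V]
    (a b : ℝ) (AD AW : ℝ → V →ₗ[ℝ] V →ₗ[ℝ] ℝ)
    (hADsym : ∀ η v w, AD η v w = AD η w v)
    (hAWsym : ∀ η v w, AW η v w = AW η w v)
    (hAWpos : ∀ η ∈ Set.Ioo a b, ∀ v : V, v ≠ 0 → 0 < AW η v v)
    (hADdiff : ∀ (v w : V), ∀ η ∈ Set.Ioo a b,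
      DifferentiableAt ℝ (fun s => AD s v w) η)
    (hAWdiff : ∀ (v w : V), ∀ η ∈ Set.Ioo a b,
      DifferentiableAt ℝ (fun s => AW s v w) η)
    (z : ℝ → V) (hz : ∀ η ∈ Set.Ioo a b, DifferentiableAt ℝ z η)
    (E : ℝ → ℝ) (hE : ∀ η ∈ Set.Ioo a b, DifferentiableAt ℝ E η)
    (heig : ∀ η ∈ Set.Ioo a b, ∀ w : V, AD η (z η) w = E η * AW η (z η) w)
    (hzne : ∀ η ∈ Set.Ioo a b, AW η (z η) (z η) ≠ 0) :
    ∀ η ∈ Set.Ioo a b,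
      deriv E η =
        (deriv (fun s => AD s (z η) (z η)) η
          - E η * deriv (fun s => AW s (z η) (z η)) η) / AW η (z η) (z η) := by
  intro η hη
  set bb := Module.finBasis ℝ V with hbb
  set v : V := ∑ i, deriv (fun s => bb.repr (z s) i) η • bb i with hv
  have hf := key bb AD η (fun i j => hADdiff _ _ η hη) z (hz η hη)
  have hg := key bb AW η (fun i j => hAWdiff _ _ η hη) z (hz η hη)
  have hEg := ((hE η hη).hasDerivAt).mul hg
  have hfg : (fun s => AD s (z s) (z s)) =ᶠ[nhds η] fun s => E s * AW s (z s) (z s) :=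
    Filter.eventuallyEq_of_mem (Ioo_mem_nhds hη.1 hη.2) (fun x hx => heig x hx (z x))
  have huniq := hf.unique (hEg.congr_of_eventuallyEq hfg)
  have hc1 : AD η v (z η) = E η * AW η v (z η) := by
    rw [hADsym, heig η hη v, hAWsym]
  have hc2 : AD η (z η) v = E η * AW η (z η) v := heig η hη v
  rw [hc1, hc2] at huniq
  have hG := hzne η hη
  rw [eq_div_iff hG]
  ring_nf at huniq ⊢
  linarith [huniq]
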